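/- If 2ℓ₀ + log₂ C(n₀,ℓ₀) − log₂ C(2ℓ₀,ℓ₀) < k₀ (with 2ℓ₀ ≤ n₀), then there is no matrix M ∈ ℝ^{k₀×n₀} such that every w ∈ {±1}^{k₀} lies in the linear span of at most ℓ₀ columns of M. -/

import Mathlib

open Finset Module

/-- Greedy coordinate selection: a subspace of `ℝ^k` of finrank `≤ d` is detected
by at most `d` coordinates. -/
lemma exists_coords (k : ℕ) : ∀ (d : ℕ) (V : Submodule ℝ (Fin k → ℝ)),
    Module.finrank ℝ V ≤ d →
    ∃ D : Finset (Fin k), D.card ≤ d ∧ ∀ v ∈ V, (∀ i ∈ D, v i = 0) → v = 0 := by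
  intro d
  induction d with
  | zero =>
    intro V hV
    refine ⟨∅, le_refl _, ?_⟩
    intro v hv _
    by_contra hvz
    have h1 : 1 ≤ Module.finrank ℝ V := by
      have : Submodule.span ℝ {v} ≤ V := by
        rw [Submodule.span_le]; simpa using hv
      have := Submodule.finrank_mono this
      rwa [finrank_span_singleton hvz] at this
    omega
  | succ d ih =>
    intro V hV
    by_cases hz : ∀ v ∈ V, v = 0
    · exact ⟨∅, by simp, fun v hv _ => hz v hv⟩
    · push_neg at hz
      obtain ⟨v₀, hv₀V, hv₀⟩ := hz
      have : ∃ i₀, v₀ i₀ ≠ 0 := by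
        by_contra h; push_neg at h; exact hv₀ (funext h)
      obtain ⟨i₀, hi₀⟩ := this
      set V' := V ⊓ LinearMap.ker (LinearMap.proj (R := ℝ) (φ := fun _ : Fin k => ℝ) i₀) with hV'
      have hlt : V' < V := by
        refine lt_of_le_of_ne inf_le_left ?_
        intro h
        have : v₀ ∈ V' := h ▸ hv₀V
        exact hi₀ this.2
      have hfr : Module.finrank ℝ V' < Module.finrank ℝ V :=
        Submodule.finrank_lt_finrank_of_lt hlt
      obtain ⟨D', hD'c, hD'⟩ := ih V' (by omega)
      refine ⟨insert i₀ D', ?_, ?_⟩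
      · calc (insert i₀ D').card ≤ D'.card + 1 := Finset.card_insert_le _ _
          _ ≤ d + 1 := by omega
      · intro v hv hvD
        have hvi₀ : v i₀ = 0 := hvD i₀ (Finset.mem_insert_self _ _)
        have hvV' : v ∈ V' := ⟨hv, hvi₀⟩
        exact hD' v hvV' (fun i hi => hvD i (Finset.mem_insert_of_mem hi))

/-- At most `2^m` sign vectors in a subspace of finrank `≤ m`. -/
lemma card_signs_le (k m : ℕ) (V : Submodule ℝ (Fin k → ℝ))
    (hV : Module.finrank ℝ V ≤ m) (W : Finset (Fin k → ℝ))
    (hW : ∀ w ∈ W, ∀ i, w i = 1 ∨ w i = -1) [DecidablePred (· ∈ V)] :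
    (W.filter (· ∈ V)).card ≤ 2 ^ m := by
  obtain ⟨D, hDc, hD⟩ := exists_coords k m V hV
  have hinj : Set.InjOn (fun (w : Fin k → ℝ) => fun i : D => decide (w i = 1))
      ((W.filter (· ∈ V) : Finset (Fin k → ℝ)) : Set (Fin k → ℝ)) := by
    intro w₁ h₁ w₂ h₂ heq
    simp only [Finset.coe_filter, Set.mem_setOf_eq] at h₁ h₂
    have hd : ∀ i ∈ D, w₁ i = w₂ i := by
      intro i hi
      have := congrFun heq ⟨i, hi⟩
      simp only [decide_eq_decide] at this
      rcases hW w₁ h₁.1 i with e1 | e1 <;> rcases hW w₂ h₂.1 i with e2 | e2 <;>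
        simp [e1, e2] at this ⊢ <;> norm_num [e1, e2] at this
    have hsub : w₁ - w₂ ∈ V := Submodule.sub_mem V h₁.2 h₂.2
    have := hD (w₁ - w₂) hsub (by intro i hi; simp [hd i hi])
    have := sub_eq_zero.mp this
    exact this
  have hcard := Finset.card_le_card_of_injOn _ (fun a _ => Finset.mem_univ _) hinj
  calc (W.filter (· ∈ V)).card ≤ (Finset.univ : Finset (↥D → Bool)).card := hcard
    _ = 2 ^ D.card := by
        rw [Finset.card_univ]
        simp [Fintype.card_fun]
    _ ≤ 2 ^ m := Nat.pow_le_pow_right (by norm_num) hDc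

set_option maxHeartbeats 1000000 in
/-- Contrapositive form of the block-construction lower bound: if
`2ℓ₀ + log₂ (n₀ choose ℓ₀) − log₂ (2ℓ₀ choose ℓ₀) < k₀` (with `2ℓ₀ ≤ n₀`), then no matrix
`M ∈ ℝ^{k₀×n₀}` has every `w ∈ {±1}^{k₀}` in the span of at most `ℓ₀` of its columns. -/
theorem no_block_construction (k₀ n₀ ℓ₀ : ℕ) (hℓn : 2 * ℓ₀ ≤ n₀)
    (hlt : 2 * (ℓ₀ : ℝ) + Real.logb 2 (Nat.choose n₀ ℓ₀)
        - Real.logb 2 (Nat.choose (2 * ℓ₀) ℓ₀) < (k₀ : ℝ)) :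
    ¬ ∃ M : Matrix (Fin k₀) (Fin n₀) ℝ,
        ∀ w : Fin k₀ → ℝ, (∀ i, w i = 1 ∨ w i = -1) →
          ∃ S : Finset (Fin n₀), S.card ≤ ℓ₀ ∧
            w ∈ Submodule.span ℝ ((fun j => fun i => M i j) '' ↑S) := by
  classical
  rintro ⟨M, hM⟩
  set col : Fin n₀ → (Fin k₀ → ℝ) := fun j i => M i j with hcol
  set W : Finset (Fin k₀ → ℝ) :=
    Finset.univ.image (fun b : Fin k₀ → Bool => fun i => if b i then (1:ℝ) else -1) with hWdef
  have hWsign : ∀ w ∈ W, ∀ i, w i = 1 ∨ w i = -1 := by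
    intro w hw i
    simp only [hWdef, Finset.mem_image] at hw
    obtain ⟨b, _, rfl⟩ := hw
    by_cases h : b i <;> simp [h]
  have hWcard : W.card = 2 ^ k₀ := by
    rw [hWdef, Finset.card_image_of_injective _ ?_, Finset.card_univ]
    · simp
    · intro b₁ b₂ h
      funext i
      have := congrFun h i
      by_cases h1 : b₁ i <;> by_cases h2 : b₂ i <;> simp [h1, h2] at this ⊢ <;> norm_num at this
  set P := Finset.powersetCard (2 * ℓ₀) (Finset.univ : Finset (Fin n₀)) with hP
  set q : (Fin k₀ → ℝ) → Finset (Fin n₀) → Prop :=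
    fun w T => w ∈ Submodule.span ℝ (col '' (↑T : Set (Fin n₀))) with hq
  have key : 2 ^ k₀ * Nat.choose (n₀ - ℓ₀) ℓ₀ ≤ Nat.choose n₀ (2 * ℓ₀) * 2 ^ (2 * ℓ₀) := by
    have upper : ∑ T ∈ P, (W.filter (fun w => q w T)).card
        ≤ Nat.choose n₀ (2 * ℓ₀) * 2 ^ (2 * ℓ₀) := by
      have hterm : ∀ T ∈ P, (W.filter (fun w => q w T)).card ≤ 2 ^ (2 * ℓ₀) := by
        intro T hT
        simp only [hP, Finset.mem_powersetCard] at hT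
        apply card_signs_le _ _ _ _ _ hWsign
        have himg : col '' (↑T : Set (Fin n₀)) = ↑(T.image col) := by
          simp [Finset.coe_image]
        rw [himg]
        calc Module.finrank ℝ (Submodule.span ℝ (↑(T.image col) : Set (Fin k₀ → ℝ)))
            ≤ (T.image col).card := finrank_span_finset_le_card _
          _ ≤ T.card := Finset.card_image_le
          _ = 2 * ℓ₀ := hT.2
      calc ∑ T ∈ P, (W.filter (fun w => q w T)).card
          ≤ ∑ _T ∈ P, 2 ^ (2 * ℓ₀) := Finset.sum_le_sum hterm
        _ = P.card * 2 ^ (2 * ℓ₀) := by rw [Finset.sum_const, smul_eq_mul]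
        _ = Nat.choose n₀ (2 * ℓ₀) * 2 ^ (2 * ℓ₀) := by
            rw [hP, Finset.card_powersetCard, Finset.card_univ, Fintype.card_fin]
    have lower : 2 ^ k₀ * Nat.choose (n₀ - ℓ₀) ℓ₀
        ≤ ∑ T ∈ P, (W.filter (fun w => q w T)).card := by
      have swap : ∑ T ∈ P, (W.filter (fun w => q w T)).card
          = ∑ w ∈ W, (P.filter (fun T => q w T)).card := by
        calc ∑ T ∈ P, (W.filter (fun w => q w T)).card
            = ∑ T ∈ P, ∑ w ∈ W, (if q w T then 1 else 0) :=
              Finset.sum_congr rfl (fun T _ => Finset.card_filter _ _)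
          _ = ∑ w ∈ W, ∑ T ∈ P, (if q w T then 1 else 0) := Finset.sum_comm
          _ = _ := Finset.sum_congr rfl (fun w _ => (Finset.card_filter _ _).symm)
      rw [swap]
      have perw : ∀ w ∈ W, Nat.choose (n₀ - ℓ₀) ℓ₀ ≤ (P.filter (fun T => q w T)).card := by
        intro w hw
        obtain ⟨S, hScard, hSspan⟩ := hM w (hWsign w hw)
        obtain ⟨S', hSS', _, hS'card⟩ := Finset.exists_subsuperset_card_eq
          (Finset.subset_univ S) hScard
          (by rw [Finset.card_univ, Fintype.card_fin]; omega)
        have hwS' : q w S' :=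
          Submodule.span_mono (Set.image_mono (Finset.coe_subset.mpr hSS')) hSspan
        have hinj2 := Finset.card_le_card_of_injOn
          (fun (U : Finset (Fin n₀)) => U ∪ S')
          (s := Finset.powersetCard ℓ₀ S'ᶜ)
          (t := P.filter (fun T => q w T)) ?_ ?_
        · refine le_trans (le_of_eq ?_) hinj2
          rw [Finset.card_powersetCard, Finset.card_compl, Fintype.card_fin, hS'card]
        · intro U hU
          simp only [Finset.mem_coe, Finset.mem_powersetCard] at hU
          have hdisj : Disjoint U S' := by
            refine Finset.disjoint_left.mpr (fun a haU haS' => ?_)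
            have := hU.1 haU
            simp only [Finset.mem_compl] at this
            exact this haS'
          refine Finset.mem_filter.mpr ⟨?_, ?_⟩
          · simp only [hP, Finset.mem_powersetCard]
            refine ⟨Finset.subset_univ _, ?_⟩
            rw [Finset.card_union_of_disjoint hdisj, hU.2, hS'card]
            omega
          · exact Submodule.span_mono
              (Set.image_mono (Finset.coe_subset.mpr Finset.subset_union_right)) hwS'
        · intro U₁ h₁ U₂ h₂ heq
          simp only [Finset.mem_coe, Finset.mem_powersetCard] at h₁ h₂
          have heq' : U₁ ∪ S' = U₂ ∪ S' := heq
          have e₁ : U₁ = (U₁ ∪ S') \ S' := by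
            rw [Finset.union_sdiff_right]
            refine (Finset.sdiff_eq_self_of_disjoint ?_).symm
            refine Finset.disjoint_left.mpr (fun a haU haS' => ?_)
            have := h₁.1 haU
            simp only [Finset.mem_compl] at this
            exact this haS'
          have e₂ : U₂ = (U₂ ∪ S') \ S' := by
            rw [Finset.union_sdiff_right]
            refine (Finset.sdiff_eq_self_of_disjoint ?_).symm
            refine Finset.disjoint_left.mpr (fun a haU haS' => ?_)
            have := h₂.1 haU
            simp only [Finset.mem_compl] at this
            exact this haS'
          rw [e₁, e₂, heq']
      calc 2 ^ k₀ * Nat.choose (n₀ - ℓ₀) ℓ₀ = ∑ _w ∈ W, Nat.choose (n₀ - ℓ₀) ℓ₀ := by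
            rw [Finset.sum_const, smul_eq_mul, hWcard]
        _ ≤ _ := Finset.sum_le_sum perw
    exact le_trans lower upper
  -- Arithmetic contradiction
  have hnl : ℓ₀ ≤ n₀ := by omega
  have ha : 0 < Nat.choose n₀ ℓ₀ := Nat.choose_pos hnl
  have hb : 0 < Nat.choose (2 * ℓ₀) ℓ₀ := Nat.choose_pos (by omega)
  have hc : 0 < Nat.choose (n₀ - ℓ₀) ℓ₀ := Nat.choose_pos (by omega)
  have hreal : (2:ℝ) ^ (2 * ℓ₀) * Nat.choose n₀ ℓ₀ < 2 ^ k₀ * Nat.choose (2 * ℓ₀) ℓ₀ := by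
    have h1 : Real.logb 2 ((2:ℝ) ^ (2 * ℓ₀) * Nat.choose n₀ ℓ₀)
        < Real.logb 2 ((2:ℝ) ^ k₀ * Nat.choose (2 * ℓ₀) ℓ₀) := by
      rw [Real.logb_mul (by positivity) (by exact_mod_cast ha.ne'),
        Real.logb_mul (by positivity) (by exact_mod_cast hb.ne')]
      rw [Real.logb_pow, Real.logb_pow, Real.logb_self_eq_one (by norm_num)]
      push_cast
      linarith
    have h2 := (Real.logb_lt_logb_iff (b := 2) (by norm_num) (by positivity) (by positivity)).mp h1
    linarith [h2]
  have hnat : 2 ^ (2 * ℓ₀) * Nat.choose n₀ ℓ₀ < 2 ^ k₀ * Nat.choose (2 * ℓ₀) ℓ₀ := by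
    exact_mod_cast hreal
  have hid : Nat.choose n₀ (2 * ℓ₀) * Nat.choose (2 * ℓ₀) ℓ₀
      = Nat.choose n₀ ℓ₀ * Nat.choose (n₀ - ℓ₀) ℓ₀ := by
    have := Nat.choose_mul (n := n₀) (k := 2 * ℓ₀) (s := ℓ₀) (by omega)
    simpa [show 2 * ℓ₀ - ℓ₀ = ℓ₀ by omega] using this
  have h1 : 2 ^ k₀ * Nat.choose (n₀ - ℓ₀) ℓ₀ * Nat.choose (2 * ℓ₀) ℓ₀
      ≤ Nat.choose n₀ (2 * ℓ₀) * 2 ^ (2 * ℓ₀) * Nat.choose (2 * ℓ₀) ℓ₀ :=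
    Nat.mul_le_mul_right _ key
  have h2 : Nat.choose n₀ (2 * ℓ₀) * 2 ^ (2 * ℓ₀) * Nat.choose (2 * ℓ₀) ℓ₀
      = 2 ^ (2 * ℓ₀) * Nat.choose n₀ ℓ₀ * Nat.choose (n₀ - ℓ₀) ℓ₀ := by
    rw [mul_right_comm, hid]; ring
  have h3 : 2 ^ (2 * ℓ₀) * Nat.choose n₀ ℓ₀ * Nat.choose (n₀ - ℓ₀) ℓ₀
      < 2 ^ k₀ * Nat.choose (2 * ℓ₀) ℓ₀ * Nat.choose (n₀ - ℓ₀) ℓ₀ :=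
    (Nat.mul_lt_mul_right hc).mpr hnat
  have hfin := lt_of_le_of_lt (h1.trans_eq h2) h3
  rw [mul_right_comm] at hfin
  exact lt_irrefl _ hfin
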